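/- Let B ∈ ℝ^{n×n}_{≥0} be non-negative with per(B) > 0, and let B* be its permanental inverse. Then for any index sets S, T ⊆ {1,...,n} with |S| = |T|, per(B(−S,−T))/per(B) ≤ per(B*(T,S)), where B(−S,−T) is B with rows in S and columns in T deleted, and B*(T,S) is the submatrix of B* with rows indexed by T and columns indexed by S. -/

import Mathlib

open Matrix BigOperators

/-- The permanent of a square matrix. -/
noncomputable def per {α : Type*} [DecidableEq α] [Fintype α] (A : Matrix α α ℝ) : ℝ :=
  ∑ σ : Equiv.Perm α, ∏ i, A i (σ i)

/-- The permanent of a (possibly rectangular) matrix whose index types are in bijection,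
defined as a sum over bijections.  For equal index types this agrees with the usual
permanent, and it is `1` for the empty matrix. -/
noncomputable def perR {α β : Type*} [Fintype α] [Fintype β] [DecidableEq α] [DecidableEq β]
    (A : Matrix α β ℝ) : ℝ :=
  ∑ f : α ≃ β, ∏ i, A i (f i)

/-- The permanental inverse. -/
noncomputable def pinv {d : ℕ} (B : Matrix (Fin (d + 1)) (Fin (d + 1)) ℝ) :
    Matrix (Fin (d + 1)) (Fin (d + 1)) ℝ :=
  Matrix.of fun i j => per (B.submatrix (Fin.succAbove j) (Fin.succAbove i)) / per B

set_option linter.unusedSectionVars false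
set_option linter.unusedVariables false
set_option maxHeartbeats 1000000

section Aux
set_option linter.unusedSectionVars false
set_option linter.unusedVariables false
variable {α β α' β' : Type*} [Fintype α] [Fintype β] [Fintype α'] [Fintype β']
  [DecidableEq α] [DecidableEq β] [DecidableEq α'] [DecidableEq β']

theorem per_eq_perR (A : Matrix α α ℝ) : per A = perR A := rfl

theorem perR_nonneg {A : Matrix α β ℝ} (hA : ∀ i j, 0 ≤ A i j) : 0 ≤ perR A :=
  Finset.sum_nonneg fun f _ => Finset.prod_nonneg fun i _ => hA i (f i)

theorem perR_submatrix_equiv (A : Matrix α β ℝ) (e : α' ≃ α) (f : β' ≃ β) :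
    perR (A.submatrix e f) = perR A := by
  unfold perR
  refine Fintype.sum_equiv (Equiv.equivCongr e f) _ _ fun g => ?_
  refine Fintype.prod_equiv e (fun i : α' => (A.submatrix e f) i (g i))
    (fun i : α => A i ((Equiv.equivCongr e f g) i)) fun x => ?_
  simp

variable {ι : Type*} [Fintype ι] [DecidableEq ι]

noncomputable def mm (A : Matrix ι ι ℝ) (U V : Finset ι) : ℝ :=
  perR (A.submatrix (fun a : ↥U => (a : ι)) (fun b : ↥V => (b : ι)))

theorem mm_nonneg {A : Matrix ι ι ℝ} (hA : ∀ i j, 0 ≤ A i j) (U V : Finset ι) :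
    0 ≤ mm A U V := perR_nonneg fun i j => hA _ _

theorem mm_univ (A : Matrix ι ι ℝ) : mm A Finset.univ Finset.univ = per A := by
  rw [per_eq_perR, mm]
  exact perR_submatrix_equiv A (Equiv.subtypeUnivEquiv fun x => Finset.mem_univ x)
    (Equiv.subtypeUnivEquiv fun x => Finset.mem_univ x)

theorem per_submatrix_succAbove {d : ℕ} (B : Matrix (Fin (d + 1)) (Fin (d + 1)) ℝ)
    (j i : Fin (d + 1)) :
    per (B.submatrix (Fin.succAbove j) (Fin.succAbove i)) = mm B {j}ᶜ {i}ᶜ := by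
  rw [per_eq_perR, mm]
  let ej : Fin d ≃ ↥({j}ᶜ : Finset (Fin (d+1))) :=
    (finSuccAboveEquiv j).trans (Equiv.subtypeEquivRight fun x => by simp)
  let ei : Fin d ≃ ↥({i}ᶜ : Finset (Fin (d+1))) :=
    (finSuccAboveEquiv i).trans (Equiv.subtypeEquivRight fun x => by simp)
  rw [← perR_submatrix_equiv (B.submatrix (fun a : ↥({j}ᶜ : Finset (Fin (d+1))) => (a : Fin (d+1)))
    (fun b : ↥({i}ᶜ : Finset (Fin (d+1))) => (b : Fin (d+1)))) ej ei]
  congr 1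
end Aux


section Enc
open Equiv
variable {ι : Type*} [Fintype ι] [DecidableEq ι]


theorem maps_compl {U V : Finset ι} {π : Equiv.Perm ι} (hc : U.card = V.card)
    (h : ∀ i ∈ U, π i ∈ V) : ∀ i ∈ Uᶜ, π i ∈ Vᶜ := by
  have himg : U.image π = V := by
    refine Finset.eq_of_subset_of_card_le (fun v hv => ?_) ?_
    · obtain ⟨u, hu, rfl⟩ := Finset.mem_image.1 hv; exact h u hu
    · rw [Finset.card_image_of_injective _ π.injective, hc]
  intro i hi
  rw [Finset.mem_compl] at hi ⊢
  intro hvi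
  rw [← himg, Finset.mem_image] at hvi
  obtain ⟨u, hu, hui⟩ := hvi
  exact hi (π.injective hui ▸ hu)

/-- restriction of a permutation mapping U into V (cards equal) to an equiv of subtypes -/
noncomputable def restr {U V : Finset ι} (π : Equiv.Perm ι) (hc : U.card = V.card)
    (h : ∀ i ∈ U, π i ∈ V) : ↥U ≃ ↥V :=
  Equiv.ofBijective (fun i => ⟨π i.1, h i.1 i.2⟩) (by
    rw [Fintype.bijective_iff_injective_and_card]
    refine ⟨fun a b hab => Subtype.ext (π.injective (congrArg Subtype.val hab)), by
      simp [Fintype.card_coe, hc]⟩)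

@[simp] theorem restr_apply {U V : Finset ι} (π : Equiv.Perm ι) (hc : U.card = V.card)
    (h : ∀ i ∈ U, π i ∈ V) (i : ↥U) : (restr π hc h i : ι) = π i := rfl

noncomputable def combineEquiv (U V : Finset ι) (f : ↥U ≃ ↥V) (g : ↥Uᶜ ≃ ↥Vᶜ) :
    Equiv.Perm ι :=
  Equiv.ofBijective
    (fun i => if h : i ∈ U then (f ⟨i, h⟩ : ι) else (g ⟨i, by simp [h]⟩ : ι)) (by
    rw [Fintype.bijective_iff_injective_and_card]
    refine ⟨fun a b hab => ?_, rfl⟩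
    have hf : ∀ (x : ↥U), (f x : ι) ∈ V := fun x => (f x).2
    have hg : ∀ (x : ↥Uᶜ), (g x : ι) ∉ V := fun x => Finset.mem_compl.1 (g x).2
    by_cases ha : a ∈ U <;> by_cases hb : b ∈ U <;> simp only [ha, hb, dif_pos, dif_neg,
      not_false_iff] at hab
    · exact congrArg Subtype.val (f.injective (Subtype.ext hab))
    · exact absurd (hab ▸ hf ⟨a, ha⟩) (hg _)
    · exact absurd (hab.symm ▸ hf ⟨b, hb⟩) (hg _)
    · exact congrArg Subtype.val (g.injective (Subtype.ext hab)))

theorem combineEquiv_apply_mem {U V : Finset ι} (f : ↥U ≃ ↥V) (g : ↥Uᶜ ≃ ↥Vᶜ)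
    {i : ι} (h : i ∈ U) : combineEquiv U V f g i = (f ⟨i, h⟩ : ι) := dif_pos h

theorem combineEquiv_apply_not_mem {U V : Finset ι} (f : ↥U ≃ ↥V) (g : ↥Uᶜ ≃ ↥Vᶜ)
    {i : ι} (h : i ∉ U) : combineEquiv U V f g i = (g ⟨i, by simp [h]⟩ : ι) := dif_neg h

/-- The key encoding lemma: sums over subtype equivs as sums over constrained permutations. -/
theorem encode (U V : Finset ι) (hc : U.card = V.card) (F : ι → ι → ℝ) :
    ∑ π ∈ Finset.univ.filter (fun π : Equiv.Perm ι => ∀ i ∈ U, π i ∈ V), ∏ i ∈ U, F i (π i)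
      = (Uᶜ.card).factorial * ∑ f : ↥U ≃ ↥V, ∏ i : ↥U, F i (f i) := by
  have hcc : Uᶜ.card = Vᶜ.card := by
    have := Finset.card_compl U; have := Finset.card_compl V
    omega
  have key : ∑ π ∈ Finset.univ.filter (fun π : Equiv.Perm ι => ∀ i ∈ U, π i ∈ V),
      ∏ i ∈ U, F i (π i)
      = ∑ p : (↥U ≃ ↥V) × (↥Uᶜ ≃ ↥Vᶜ), ∏ i : ↥U, F i (p.1 i) := by
    refine Finset.sum_bij'
      (i := fun π hπ => (restr π hc (Finset.mem_filter.1 hπ).2,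
        restr π hcc (maps_compl hc (Finset.mem_filter.1 hπ).2)))
      (j := fun p _ => combineEquiv U V p.1 p.2) ?_ ?_ ?_ ?_ ?_
    · intro a ha; exact Finset.mem_univ _
    · intro p hp
      refine Finset.mem_filter.2 ⟨Finset.mem_univ _, fun i hi => ?_⟩
      rw [combineEquiv_apply_mem p.1 p.2 hi]
      exact (p.1 ⟨i, hi⟩).2
    · intro π hπ
      ext i
      by_cases h : i ∈ U
      · rw [combineEquiv_apply_mem _ _ h]; rfl
      · rw [combineEquiv_apply_not_mem _ _ h]; rfl
    · intro p hp
      ext i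
      · simp only [restr_apply]
        rw [combineEquiv_apply_mem p.1 p.2 i.2]
      · simp only [restr_apply]
        rw [combineEquiv_apply_not_mem p.1 p.2 (Finset.mem_compl.1 i.2)]
    · intro π hπ
      rw [← Finset.prod_attach U (fun x => F x (π x))]
      exact Finset.prod_congr rfl fun i _ => rfl
  rw [key, Fintype.sum_prod_type_right]
  simp only []
  have : Fintype.card (↥Uᶜ ≃ ↥Vᶜ) = (Uᶜ.card).factorial := by
    rw [Fintype.card_equiv (Fintype.equivOfCardEq (by simp only [Fintype.card_coe, hcc]))]
    simp only [Fintype.card_coe]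
  rw [Finset.sum_const, ← Fintype.card, this, nsmul_eq_mul]

end Enc

section WalkAll
open Equiv
variable {ι : Type*} [Fintype ι] [DecidableEq ι]


section Walk
variable (σ π : Equiv.Perm ι) (S : Finset ι) (t0 : ι)

/-- the alternating walk -/
def xseq (j : ℕ) : ι := ((σ⁻¹ * π) ^ j) (σ⁻¹ t0)

theorem xseq_zero : xseq σ π t0 0 = σ⁻¹ t0 := rfl

theorem xseq_succ (j : ℕ) : xseq σ π t0 (j + 1) = σ⁻¹ (π (xseq σ π t0 j)) := by
  simp only [xseq, pow_succ', Equiv.Perm.mul_apply]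

theorem sigma_xseq_zero : σ (xseq σ π t0 0) = t0 := by
  simp [xseq_zero]

theorem sigma_xseq_succ (j : ℕ) : σ (xseq σ π t0 (j + 1)) = π (xseq σ π t0 j) := by
  simp [xseq_succ]

/-- first hitting time of `S` -/
noncomputable def pathm : ℕ := sInf {j | xseq σ π t0 j ∈ S}

theorem hit_exists (hs' : π⁻¹ t0 ∈ S) : ∃ j, xseq σ π t0 j ∈ S := by
  refine ⟨orderOf (σ⁻¹ * π) - 1, ?_⟩
  have hpos : 0 < orderOf (σ⁻¹ * π) := orderOf_pos _
  have h1 : (σ⁻¹ * π) ^ (orderOf (σ⁻¹ * π) - 1) * (σ⁻¹ * π) = 1 := by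
    rw [← pow_succ, Nat.sub_add_cancel hpos, pow_orderOf_eq_one]
  have h2 : (σ⁻¹ * π) ^ (orderOf (σ⁻¹ * π) - 1) = (σ⁻¹ * π)⁻¹ := by
    rw [eq_inv_iff_mul_eq_one]; exact h1
  show ((σ⁻¹ * π) ^ (orderOf (σ⁻¹ * π) - 1)) (σ⁻¹ t0) ∈ S
  rw [h2]
  have : ((σ⁻¹ * π)⁻¹ : Equiv.Perm ι) (σ⁻¹ t0) = π⁻¹ t0 := by
    simp [_root_.mul_inv_rev, Equiv.Perm.mul_apply]
  rw [this]; exact hs'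

theorem pathm_mem (hs' : π⁻¹ t0 ∈ S) : xseq σ π t0 (pathm σ π S t0) ∈ S :=
  Nat.sInf_mem (hit_exists σ π S t0 hs')

theorem pathm_not_mem {j : ℕ} (hj : j < pathm σ π S t0) : xseq σ π t0 j ∉ S :=
  Nat.notMem_of_lt_sInf hj

theorem xseq_injOn (hs' : π⁻¹ t0 ∈ S) {a b : ℕ} (ha : a ≤ pathm σ π S t0) (hb : b ≤ pathm σ π S t0)
    (hab : xseq σ π t0 a = xseq σ π t0 b) : a = b := by
  have key : ∀ a b : ℕ, a < b → b ≤ pathm σ π S t0 → xseq σ π t0 a ≠ xseq σ π t0 b := by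
    intro a b hlt hble heq
    set φ := σ⁻¹ * π with hφ
    obtain ⟨d, rfl⟩ : ∃ d, b = a + d := ⟨b - a, by omega⟩
    have hd : 0 < d := by omega
    have hz : xseq σ π t0 (a + d) = (φ ^ a) ((φ ^ d) (σ⁻¹ t0)) := by
      simp [xseq, pow_add, Equiv.Perm.mul_apply, hφ]
    have hz2 : (φ ^ d) (σ⁻¹ t0) = σ⁻¹ t0 := by
      have : (φ ^ a) (σ⁻¹ t0) = (φ ^ a) ((φ ^ d) (σ⁻¹ t0)) := by
        rw [← hz]; exact heq
      exact ((φ ^ a).injective this).symm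
    have hd1 : xseq σ π t0 (d - 1) ∈ S := by
      have : φ (xseq σ π t0 (d - 1)) = σ⁻¹ t0 := by
        have : (φ ^ d) = φ * φ ^ (d - 1) := by
          rw [← pow_succ']; congr 1; omega
        rw [this, Equiv.Perm.mul_apply] at hz2
        exact hz2
      have h3 : xseq σ π t0 (d - 1) = φ⁻¹ (σ⁻¹ t0) := by
        rw [← this, Equiv.Perm.coe_inv, Equiv.symm_apply_apply]
      have h4 : (φ⁻¹ : Equiv.Perm ι) (σ⁻¹ t0) = π⁻¹ t0 := by
        simp [hφ, _root_.mul_inv_rev, Equiv.Perm.mul_apply]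
      rw [h3, h4]; exact hs'
    exact pathm_not_mem σ π S t0 (by omega) hd1
  rcases lt_trichotomy a b with h | h | h
  · exact absurd hab (key a b h hb)
  · exact h
  · exact absurd hab.symm (key b a h ha)

/-- the list of columns along the walk -/
noncomputable def cycList : List ι :=
  (List.range (pathm σ π S t0 + 1)).map (fun j => σ (xseq σ π t0 j))

theorem cycList_length : (cycList σ π S t0).length = pathm σ π S t0 + 1 := by
  simp [cycList]

theorem cycList_get (j : ℕ) (hj : j < pathm σ π S t0 + 1) :
    (cycList σ π S t0)[j]'(by rw [cycList_length]; exact hj) = σ (xseq σ π t0 j) := by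
  simp [cycList]

theorem cycList_nodup (hs' : π⁻¹ t0 ∈ S) : (cycList σ π S t0).Nodup := by
  refine List.Nodup.map_on ?_ List.nodup_range
  intro a ha b hb hab
  rw [List.mem_range] at ha hb
  exact xseq_injOn σ π S t0 hs' (by omega) (by omega) (σ.injective hab)

theorem cycList_mem {z : ι} :
    z ∈ cycList σ π S t0 ↔ ∃ j ≤ pathm σ π S t0, σ (xseq σ π t0 j) = z := by
  simp only [cycList, List.mem_map, List.mem_range]
  constructor
  · rintro ⟨j, hj, rfl⟩; exact ⟨j, by omega, rfl⟩
  · rintro ⟨j, hj, rfl⟩; exact ⟨j, by omega, rfl⟩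

noncomputable def zeta : Equiv.Perm ι := (cycList σ π S t0).formPerm

theorem zeta_step (hs' : π⁻¹ t0 ∈ S) {j : ℕ} (hj : j < pathm σ π S t0) :
    zeta σ π S t0 (σ (xseq σ π t0 j)) = σ (xseq σ π t0 (j + 1)) := by
  have h := List.formPerm_apply_getElem (cycList σ π S t0) (cycList_nodup σ π S t0 hs') j
    (by rw [cycList_length]; omega)
  simp only [cycList, List.getElem_map, List.getElem_range, List.length_map,
    List.length_range] at h
  rw [Nat.mod_eq_of_lt (by omega)] at h
  simp only [zeta, cycList]
  exact h

theorem zeta_last (hs' : π⁻¹ t0 ∈ S) :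
    zeta σ π S t0 (σ (xseq σ π t0 (pathm σ π S t0))) = t0 := by
  have h := List.formPerm_apply_getElem (cycList σ π S t0) (cycList_nodup σ π S t0 hs')
    (pathm σ π S t0) (by rw [cycList_length]; omega)
  simp only [cycList, List.getElem_map, List.getElem_range, List.length_map,
    List.length_range] at h
  rw [Nat.mod_self] at h
  have h0 : σ (xseq σ π t0 0) = t0 := sigma_xseq_zero σ π t0
  simp only [zeta, cycList]
  rw [h, h0]

theorem zeta_fix {z : ι} (hz : ∀ j ≤ pathm σ π S t0, z ≠ σ (xseq σ π t0 j)) :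
    zeta σ π S t0 z = z := by
  refine List.formPerm_apply_of_notMem ?_
  rw [cycList_mem]
  rintro ⟨j, hj, hjz⟩
  exact hz j hj hjz.symm

end Walk

section Swap
variable (σ π : Equiv.Perm ι) (S : Finset ι) (t0 : ι)

noncomputable def pset : Finset ι := (Finset.range (pathm σ π S t0 + 1)).image (xseq σ π t0)

noncomputable def pend : ι := xseq σ π t0 (pathm σ π S t0)

noncomputable def muP : Equiv.Perm ι := zeta σ π S t0 * σ

noncomputable def nuP : Equiv.Perm ι :=
  (zeta σ π S t0)⁻¹ * π * Equiv.swap (pend σ π S t0) (π⁻¹ t0)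

theorem mem_pset {i : ι} : i ∈ pset σ π S t0 ↔ ∃ j ≤ pathm σ π S t0, xseq σ π t0 j = i := by
  simp only [pset, Finset.mem_image, Finset.mem_range]
  constructor
  · rintro ⟨j, hj, rfl⟩; exact ⟨j, by omega, rfl⟩
  · rintro ⟨j, hj, rfl⟩; exact ⟨j, by omega, rfl⟩

theorem pend_mem_pset : pend σ π S t0 ∈ pset σ π S t0 :=
  (mem_pset σ π S t0).2 ⟨_, le_refl _, rfl⟩

theorem pend_mem (hs' : π⁻¹ t0 ∈ S) : pend σ π S t0 ∈ S := pathm_mem σ π S t0 hs'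

theorem pset_S_eq_pend (hs' : π⁻¹ t0 ∈ S) {i : ι} (hi : i ∈ pset σ π S t0) (hiS : i ∈ S) :
    i = pend σ π S t0 := by
  obtain ⟨j, hj, rfl⟩ := (mem_pset σ π S t0).1 hi
  rcases eq_or_lt_of_le hj with h | h
  · rw [h]; rfl
  · exact absurd hiS (pathm_not_mem σ π S t0 h)

theorem zeta_fix_of (hs' : π⁻¹ t0 ∈ S) {z : ι} (hz0 : z ≠ t0)
    (hz : ∀ l < pathm σ π S t0, z ≠ π (xseq σ π t0 l)) : zeta σ π S t0 z = z := by
  refine zeta_fix σ π S t0 ?_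
  intro j hj
  cases j with
  | zero => rw [sigma_xseq_zero]; exact hz0
  | succ l => rw [sigma_xseq_succ]; exact hz l (by omega)

theorem mu_eq_off (hs' : π⁻¹ t0 ∈ S) {i : ι} (hi : i ∉ pset σ π S t0) :
    muP σ π S t0 i = σ i := by
  show zeta σ π S t0 (σ i) = σ i
  refine zeta_fix σ π S t0 fun j hj heq => ?_
  exact hi ((mem_pset σ π S t0).2 ⟨j, hj, (σ.injective heq).symm⟩)

theorem mu_eq_on (hs' : π⁻¹ t0 ∈ S) {i : ι} (hi : i ∈ pset σ π S t0)
    (hne : i ≠ pend σ π S t0) : muP σ π S t0 i = π i := by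
  obtain ⟨j, hj, rfl⟩ := (mem_pset σ π S t0).1 hi
  have hjm : j < pathm σ π S t0 := by
    rcases eq_or_lt_of_le hj with h | h
    · exact absurd (h ▸ rfl) hne
    · exact h
  show zeta σ π S t0 (σ (xseq σ π t0 j)) = π (xseq σ π t0 j)
  rw [zeta_step σ π S t0 hs' hjm, sigma_xseq_succ]

theorem mu_pend (hs' : π⁻¹ t0 ∈ S) : muP σ π S t0 (pend σ π S t0) = t0 :=
  zeta_last σ π S t0 hs'

theorem nu_apply (i : ι) :
    nuP σ π S t0 i = (zeta σ π S t0)⁻¹ (π (Equiv.swap (pend σ π S t0) (π⁻¹ t0) i)) := rfl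

theorem nu_eq_on (hs' : π⁻¹ t0 ∈ S) {i : ι} (hi : i ∈ pset σ π S t0) :
    nuP σ π S t0 i = σ i := by
  obtain ⟨j, hj, rfl⟩ := (mem_pset σ π S t0).1 hi
  rcases eq_or_lt_of_le hj with h | h
  · subst h
    rw [nu_apply]
    have h1 : Equiv.swap (pend σ π S t0) (π⁻¹ t0) (xseq σ π t0 (pathm σ π S t0))
        = π⁻¹ t0 := Equiv.swap_apply_left _ _
    rw [h1]
    have h2 : π (π⁻¹ t0) = t0 := Equiv.apply_symm_apply π t0
    rw [h2, Equiv.Perm.inv_eq_iff_eq]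
    exact (zeta_last σ π S t0 hs').symm
  · rw [nu_apply]
    have hne1 : xseq σ π t0 j ≠ pend σ π S t0 := by
      intro he
      exact absurd (xseq_injOn σ π S t0 hs' hj (le_refl _) he) (by omega)
    have hne2 : xseq σ π t0 j ≠ π⁻¹ t0 := by
      intro he
      exact pathm_not_mem σ π S t0 h (he ▸ hs')
    rw [Equiv.swap_apply_of_ne_of_ne hne1 hne2, Equiv.Perm.inv_eq_iff_eq]
    rw [← sigma_xseq_succ σ π t0 j]
    exact (zeta_step σ π S t0 hs' h).symm

theorem nu_eq_off (hs' : π⁻¹ t0 ∈ S) {i : ι} (hi : i ∉ pset σ π S t0) (hiS : i ∉ S) :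
    nuP σ π S t0 i = π i := by
  rw [nu_apply]
  have hne1 : i ≠ pend σ π S t0 := fun he => hi (he ▸ pend_mem_pset σ π S t0)
  have hne2 : i ≠ π⁻¹ t0 := fun he => hiS (he ▸ hs')
  rw [Equiv.swap_apply_of_ne_of_ne hne1 hne2]
  have hfix : zeta σ π S t0 (π i) = π i := by
    refine zeta_fix_of σ π S t0 hs' ?_ ?_
    · intro he
      exact hiS ((show i = π⁻¹ t0 by rw [← he, Equiv.Perm.coe_inv, Equiv.symm_apply_apply]) ▸ hs')
    · intro l hl he
      exact hi ((mem_pset σ π S t0).2 ⟨l, by omega, (π.injective he).symm⟩)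
  rw [Equiv.Perm.inv_eq_iff_eq]
  exact hfix.symm

theorem nu_mem_erase (hs' : π⁻¹ t0 ∈ S) {T : Finset ι} (hπS : ∀ i ∈ S, π i ∈ T) :
    ∀ u ∈ S.erase (pend σ π S t0), nuP σ π S t0 u ∈ T.erase t0 := by
  intro u hu
  obtain ⟨hune, huS⟩ := Finset.mem_erase.1 hu
  have hunp : u ∉ pset σ π S t0 := fun hmem => hune (pset_S_eq_pend σ π S t0 hs' hmem huS)
  by_cases hus : u = π⁻¹ t0
  · subst hus
    rw [nu_apply, Equiv.swap_apply_right]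
    have hpt : π (pend σ π S t0) ≠ t0 := by
      intro he
      apply hune
      exact ((Equiv.Perm.eq_inv_iff_eq).2 he).symm
    have hfix : zeta σ π S t0 (π (pend σ π S t0)) = π (pend σ π S t0) := by
      refine zeta_fix_of σ π S t0 hs' hpt ?_
      intro l hl he
      have := π.injective he
      have hl2 : xseq σ π t0 (pathm σ π S t0) = xseq σ π t0 l := this
      have := xseq_injOn σ π S t0 hs' (le_refl _) (le_of_lt hl) hl2
      omega
    have h6 : (zeta σ π S t0)⁻¹ (π (pend σ π S t0)) = π (pend σ π S t0) := by
      rw [Equiv.Perm.inv_eq_iff_eq]; exact hfix.symm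
    rw [h6, Finset.mem_erase]
    exact ⟨hpt, hπS _ (pend_mem σ π S t0 hs')⟩
  · rw [nu_apply, Equiv.swap_apply_of_ne_of_ne hune hus]
    have hne : π u ≠ t0 := by
      intro he
      exact hus (by rw [← he, Equiv.Perm.coe_inv, Equiv.symm_apply_apply])
    have hfix : zeta σ π S t0 (π u) = π u := by
      refine zeta_fix_of σ π S t0 hs' hne ?_
      intro l hl he
      exact (pathm_not_mem σ π S t0 hl) ((π.injective he) ▸ huS)
    have h6 : (zeta σ π S t0)⁻¹ (π u) = π u := by
      rw [Equiv.Perm.inv_eq_iff_eq]; exact hfix.symm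
    rw [h6, Finset.mem_erase]
    exact ⟨hne, hπS _ huS⟩

theorem recon_xseq (hs' : π⁻¹ t0 ∈ S) :
    ∀ j ≤ pathm σ π S t0, xseq (nuP σ π S t0) (muP σ π S t0) t0 j = xseq σ π t0 j := by
  intro j
  induction j with
  | zero =>
    intro _
    rw [xseq_zero, xseq_zero, Equiv.Perm.inv_eq_iff_eq]
    have h := nu_eq_on σ π S t0 hs' ((mem_pset σ π S t0).2 ⟨0, Nat.zero_le _, rfl⟩)
    rw [xseq_zero] at h
    rw [h, Equiv.Perm.coe_inv, Equiv.apply_symm_apply]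
  | succ j ih =>
    intro hj
    have hjm : j < pathm σ π S t0 := by omega
    rw [xseq_succ, ih (by omega)]
    have h1 : muP σ π S t0 (xseq σ π t0 j) = π (xseq σ π t0 j) := by
      refine mu_eq_on σ π S t0 hs' ((mem_pset σ π S t0).2 ⟨j, by omega, rfl⟩) ?_
      intro he
      exact absurd (xseq_injOn σ π S t0 hs' (by omega) (le_refl _) he) (by omega)
    have h2 : nuP σ π S t0 (xseq σ π t0 (j+1)) = σ (xseq σ π t0 (j+1)) :=
      nu_eq_on σ π S t0 hs' ((mem_pset σ π S t0).2 ⟨j+1, by omega, rfl⟩)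
    rw [h1, Equiv.Perm.inv_eq_iff_eq, ← sigma_xseq_succ σ π t0 j]
    exact h2.symm

theorem recon_pathm (hs' : π⁻¹ t0 ∈ S) :
    pathm (nuP σ π S t0) (muP σ π S t0) S t0 = pathm σ π S t0 := by
  have hmem : xseq (nuP σ π S t0) (muP σ π S t0) t0 (pathm σ π S t0) ∈ S := by
    rw [recon_xseq σ π S t0 hs' _ (le_refl _)]
    exact pathm_mem σ π S t0 hs'
  have hle : pathm (nuP σ π S t0) (muP σ π S t0) S t0 ≤ pathm σ π S t0 :=
    Nat.sInf_le hmem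
  rcases eq_or_lt_of_le hle with h | h
  · exact h
  · exfalso
    have hmem2 := Nat.sInf_mem (⟨_, hmem⟩ :
      {j | xseq (nuP σ π S t0) (muP σ π S t0) t0 j ∈ S}.Nonempty)
    simp only [Set.mem_setOf_eq] at hmem2
    have hmem3 : xseq (nuP σ π S t0) (muP σ π S t0) t0
        (pathm (nuP σ π S t0) (muP σ π S t0) S t0) ∈ S := hmem2
    rw [recon_xseq σ π S t0 hs' _ (le_of_lt h)] at hmem3
    exact pathm_not_mem σ π S t0 h hmem3

theorem recon_zeta (hs' : π⁻¹ t0 ∈ S) :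
    zeta (nuP σ π S t0) (muP σ π S t0) S t0 = zeta σ π S t0 := by
  unfold zeta
  congr 1
  unfold cycList
  rw [recon_pathm σ π S t0 hs']
  refine List.map_congr_left fun j hj => ?_
  rw [List.mem_range] at hj
  rw [recon_xseq σ π S t0 hs' j (by omega)]
  exact nu_eq_on σ π S t0 hs' ((mem_pset σ π S t0).2 ⟨j, by omega, rfl⟩)

theorem recon_sigma (hs' : π⁻¹ t0 ∈ S) :
    (zeta (nuP σ π S t0) (muP σ π S t0) S t0)⁻¹ * muP σ π S t0 = σ := by
  rw [recon_zeta σ π S t0 hs', muP, ← mul_assoc, inv_mul_cancel, one_mul]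

theorem recon_pi (hs' : π⁻¹ t0 ∈ S) :
    zeta (nuP σ π S t0) (muP σ π S t0) S t0 * nuP σ π S t0
      * Equiv.swap (pend σ π S t0) (π⁻¹ t0) = π := by
  rw [recon_zeta σ π S t0 hs', nuP, mul_assoc, mul_assoc, mul_assoc,
    Equiv.swap_mul_self, mul_one, mul_inv_cancel_left]

end Swap

section Weight
variable (σ π : Equiv.Perm ι) (S : Finset ι) (t0 : ι)

theorem weight_eq (hs' : π⁻¹ t0 ∈ S) (A : Matrix ι ι ℝ) :
    (∏ i, A i (σ i)) * ∏ i ∈ Sᶜ, A i (π i)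
      = (∏ i ∈ ({pend σ π S t0} : Finset ι)ᶜ, A i (muP σ π S t0 i))
        * ∏ i ∈ (S.erase (pend σ π S t0))ᶜ, A i (nuP σ π S t0 i) := by
  set s := pend σ π S t0 with hsdef
  set P := pset σ π S t0 with hPdef
  have hsP : s ∈ P := pend_mem_pset σ π S t0
  have hsS : s ∈ S := pend_mem σ π S t0 hs'
  have hD2 : ({s} : Finset ι)ᶜ = (P.erase s) ∪ Pᶜ := by
    ext i
    simp only [Finset.mem_compl, Finset.mem_singleton, Finset.mem_union, Finset.mem_erase]
    by_cases hiP : i ∈ P <;> by_cases his : i = s <;> simp [hiP, his, hsP]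
  have hD3 : Sᶜ = (P.erase s) ∪ (Sᶜ \ P) := by
    ext i
    simp only [Finset.mem_compl, Finset.mem_union, Finset.mem_erase, Finset.mem_sdiff]
    constructor
    · intro hi
      by_cases hiP : i ∈ P
      · exact Or.inl ⟨fun he => hi (he ▸ hsS), hiP⟩
      · exact Or.inr ⟨hi, hiP⟩
    · rintro (⟨hne, hiP⟩ | ⟨hi, _⟩)
      · intro hiS; exact hne (pset_S_eq_pend σ π S t0 hs' hiP hiS)
      · exact hi
  have hD4 : (S.erase s)ᶜ = P ∪ (Sᶜ \ P) := by
    ext i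
    simp only [Finset.mem_compl, Finset.mem_union, Finset.mem_erase, Finset.mem_sdiff,
      not_and]
    constructor
    · intro hi
      by_cases hiP : i ∈ P
      · exact Or.inl hiP
      · refine Or.inr ⟨?_, hiP⟩
        have hne : i ≠ s := fun he => hiP (he ▸ hsP)
        exact hi hne
    · rintro (hiP | ⟨hiS, _⟩)
      · intro hne hiS; exact hne (pset_S_eq_pend σ π S t0 hs' hiP hiS)
      · intro _; exact hiS
  have hdisj1 : Disjoint (P.erase s) Pᶜ :=
    Finset.disjoint_left.2 fun a ha hc =>
      (Finset.mem_compl.1 hc) (Finset.mem_of_mem_erase ha)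
  have hdisj2 : Disjoint (P.erase s) (Sᶜ \ P) :=
    Finset.disjoint_left.2 fun a ha hc =>
      (Finset.mem_sdiff.1 hc).2 (Finset.mem_of_mem_erase ha)
  have hdisj3 : Disjoint P (Sᶜ \ P) :=
    Finset.disjoint_left.2 fun a ha hc => (Finset.mem_sdiff.1 hc).2 ha
  have e1 : (∏ i, A i (σ i)) = (∏ i ∈ P, A i (σ i)) * ∏ i ∈ Pᶜ, A i (σ i) :=
    (Finset.prod_mul_prod_compl P _).symm
  have e2 : ∏ i ∈ Sᶜ, A i (π i)
      = (∏ i ∈ P.erase s, A i (π i)) * ∏ i ∈ Sᶜ \ P, A i (π i) := by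
    conv_lhs => rw [hD3]
    rw [Finset.prod_union hdisj2]
  have e3 : ∏ i ∈ ({s} : Finset ι)ᶜ, A i (muP σ π S t0 i)
      = (∏ i ∈ P.erase s, A i (π i)) * ∏ i ∈ Pᶜ, A i (σ i) := by
    rw [hD2, Finset.prod_union hdisj1]
    congr 1
    · refine Finset.prod_congr rfl fun i hi => ?_
      rw [mu_eq_on σ π S t0 hs' (Finset.mem_of_mem_erase hi) (Finset.mem_erase.1 hi).1]
    · refine Finset.prod_congr rfl fun i hi => ?_
      rw [mu_eq_off σ π S t0 hs' (Finset.mem_compl.1 hi)]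
  have e4 : ∏ i ∈ (S.erase s)ᶜ, A i (nuP σ π S t0 i)
      = (∏ i ∈ P, A i (σ i)) * ∏ i ∈ Sᶜ \ P, A i (π i) := by
    rw [hD4, Finset.prod_union hdisj3]
    congr 1
    · refine Finset.prod_congr rfl fun i hi => ?_
      rw [nu_eq_on σ π S t0 hs' hi]
    · refine Finset.prod_congr rfl fun i hi => ?_
      obtain ⟨hiS, hiP⟩ := Finset.mem_sdiff.1 hi
      rw [nu_eq_off σ π S t0 hs' hiP (Finset.mem_compl.1 hiS)]
  rw [e1, e2, e3, e4]
  ring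

end Weight

end WalkAll

section Claim
open Equiv
variable {ι : Type*} [Fintype ι] [DecidableEq ι]

theorem inv_mem_of_maps (π : Equiv.Perm ι) {S T : Finset ι} {t0 : ι}
    (hπ : ∀ i ∈ Sᶜ, π i ∈ Tᶜ) (ht0 : t0 ∈ T) : π⁻¹ t0 ∈ S := by
  by_contra h
  have := hπ _ (Finset.mem_compl.2 h)
  rw [Equiv.Perm.coe_inv, Equiv.apply_symm_apply] at this
  exact (Finset.mem_compl.1 this) ht0

theorem mm_eq_sum {A : Matrix ι ι ℝ} {U V : Finset ι} :
    mm A U V = ∑ f : ↥U ≃ ↥V, ∏ i : ↥U, A i (f i) := rfl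

theorem claim_step (A : Matrix ι ι ℝ) (hA : ∀ i j, 0 ≤ A i j) (S T : Finset ι)
    (hcard : S.card = T.card) {t0 : ι} (ht0 : t0 ∈ T) :
    per A * mm A Sᶜ Tᶜ ≤
      ∑ s ∈ S, mm A ({s} : Finset ι)ᶜ ({t0} : Finset ι)ᶜ
        * mm A ((S.erase s)ᶜ) ((T.erase t0)ᶜ) := by
  have hkpos : 0 < S.card := by rw [hcard]; exact Finset.card_pos.2 ⟨t0, ht0⟩
  have hcompl : (Sᶜ : Finset ι).card = (Tᶜ : Finset ι).card := by
    rw [Finset.card_compl, Finset.card_compl, hcard]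
  -- source data
  set filt : Finset (Equiv.Perm ι) :=
    Finset.univ.filter (fun π => ∀ i ∈ Sᶜ, π i ∈ Tᶜ) with hfilt
  set src : Finset (Equiv.Perm ι × Equiv.Perm ι) := Finset.univ ×ˢ filt with hsrc
  set w : Equiv.Perm ι × Equiv.Perm ι → ℝ :=
    fun p => (∏ i, A i (p.1 i)) * ∏ i ∈ Sᶜ, A i (p.2 i) with hw
  -- target data
  set w1 : ι → Equiv.Perm ι → ℝ := fun s μ => ∏ i ∈ ({s} : Finset ι)ᶜ, A i (μ i) with hw1
  set w2 : ι → Equiv.Perm ι → ℝ := fun s ν => ∏ i ∈ ((S.erase s)ᶜ : Finset ι), A i (ν i)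
    with hw2
  set c1 : ι → Equiv.Perm ι → Prop :=
    fun s μ => ∀ i ∈ ({s} : Finset ι)ᶜ, μ i ∈ ({t0} : Finset ι)ᶜ with hc1
  set c2 : ι → Equiv.Perm ι → Prop :=
    fun s ν => ∀ i ∈ ((S.erase s)ᶜ : Finset ι), ν i ∈ ((T.erase t0)ᶜ : Finset ι) with hc2
  set W : ι × ι × Equiv.Perm ι × Equiv.Perm ι → ℝ :=
    fun q => w1 q.2.1 q.2.2.1 * w2 q.2.1 q.2.2.2 with hW
  set tgt : Finset (ι × ι × Equiv.Perm ι × Equiv.Perm ι) :=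
    (S ×ˢ S ×ˢ Finset.univ ×ˢ Finset.univ).filter
      (fun q => c1 q.2.1 q.2.2.1 ∧ c2 q.2.1 q.2.2.2) with htgt
  set Φ : Equiv.Perm ι × Equiv.Perm ι → ι × ι × Equiv.Perm ι × Equiv.Perm ι :=
    fun p => (p.2⁻¹ t0, pend p.1 p.2 S t0, muP p.1 p.2 S t0, nuP p.1 p.2 S t0) with hΦ
  -- facts about source members
  have hmem_src : ∀ p ∈ src, (∀ i ∈ Sᶜ, p.2 i ∈ Tᶜ) := by
    intro p hp
    rw [hsrc, Finset.mem_product] at hp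
    exact (Finset.mem_filter.1 hp.2).2
  have hs'_src : ∀ p ∈ src, p.2⁻¹ t0 ∈ S := fun p hp =>
    inv_mem_of_maps p.2 (hmem_src p hp) ht0
  have hπS_src : ∀ p ∈ src, ∀ i ∈ S, p.2 i ∈ T := by
    intro p hp i hi
    have := maps_compl hcompl (hmem_src p hp) i (by rwa [compl_compl])
    rwa [compl_compl] at this
  -- Φ maps into tgt
  have himg : ∀ p ∈ src, Φ p ∈ tgt := by
    intro p hp
    have hs' := hs'_src p hp
    rw [htgt, Finset.mem_filter, Finset.mem_product, Finset.mem_product]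
    refine ⟨⟨hs', pend_mem p.1 p.2 S t0 hs', by simp⟩, ?_, ?_⟩
    · -- c1
      intro i hi
      rw [Finset.mem_compl, Finset.mem_singleton] at hi ⊢
      intro he
      apply hi
      have := mu_pend p.1 p.2 S t0 hs'
      exact (muP p.1 p.2 S t0).injective (by rw [he, this])
    · -- c2
      have hce : (S.erase (pend p.1 p.2 S t0)).card = (T.erase t0).card := by
        rw [Finset.card_erase_of_mem (pend_mem p.1 p.2 S t0 hs'),
          Finset.card_erase_of_mem ht0, hcard]
      exact maps_compl hce (nu_mem_erase p.1 p.2 S t0 hs' (hπS_src p hp))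
  -- injectivity
  have hinj : ∀ p ∈ src, ∀ p' ∈ src, Φ p = Φ p' → p = p' := by
    intro p hp p' hp' heq
    have hs' := hs'_src p hp
    have hs'2 := hs'_src p' hp'
    have h1 : p.2⁻¹ t0 = p'.2⁻¹ t0 := congrArg Prod.fst heq
    have h2 : pend p.1 p.2 S t0 = pend p'.1 p'.2 S t0 :=
      congrArg (fun q => q.2.1) heq
    have h3 : muP p.1 p.2 S t0 = muP p'.1 p'.2 S t0 :=
      congrArg (fun q => q.2.2.1) heq
    have h4 : nuP p.1 p.2 S t0 = nuP p'.1 p'.2 S t0 :=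
      congrArg (fun q => q.2.2.2) heq
    have e1 : p.1 = p'.1 := by
      have r1 := recon_sigma p.1 p.2 S t0 hs'
      have r2 := recon_sigma p'.1 p'.2 S t0 hs'2
      rw [← r1, ← r2, h3, h4]
    have e2 : p.2 = p'.2 := by
      have r1 := recon_pi p.1 p.2 S t0 hs'
      have r2 := recon_pi p'.1 p'.2 S t0 hs'2
      rw [← r1, ← r2, h3, h4, h2, h1]
    exact Prod.ext e1 e2
  -- weights agree
  have hwt : ∀ p ∈ src, W (Φ p) = w p := by
    intro p hp
    have hs' := hs'_src p hp
    rw [hW, hΦ, hw, hw1, hw2]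
    exact (weight_eq p.1 p.2 S t0 hs' A).symm
  -- step A : source sum
  have hA1 : ∑ p ∈ src, w p
      = (per A * mm A Sᶜ Tᶜ) * (Nat.factorial S.card : ℝ) := by
    rw [hsrc, Finset.sum_product]
    have : ∀ σ : Equiv.Perm ι, ∑ π ∈ filt, w (σ, π)
        = (∏ i, A i (σ i)) * ∑ π ∈ filt, ∏ i ∈ Sᶜ, A i (π i) := by
      intro σ; rw [Finset.mul_sum]
    simp only [this]
    rw [← Finset.sum_mul]
    have henc := encode (Sᶜ : Finset ι) (Tᶜ : Finset ι) hcompl (fun i c => A i c)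
    rw [compl_compl] at henc
    rw [hfilt, henc, ← mm_eq_sum]
    show per A * ((S.card.factorial : ℝ) * mm A Sᶜ Tᶜ) = per A * mm A Sᶜ Tᶜ * S.card.factorial
    ring
  -- step C : target sum
  have hC : ∑ q ∈ tgt, W q
      = (∑ s ∈ S, mm A ({s} : Finset ι)ᶜ ({t0} : Finset ι)ᶜ
          * mm A ((S.erase s)ᶜ) ((T.erase t0)ᶜ)) * (Nat.factorial S.card : ℝ) := by
    rw [htgt, Finset.sum_filter, Finset.sum_product]
    have hinner : ∀ a : ι, ∑ b ∈ S ×ˢ Finset.univ ×ˢ Finset.univ,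
        (if c1 b.1 b.2.1 ∧ c2 b.1 b.2.2 then W (a, b) else 0)
        = ∑ s ∈ S, (∑ μ ∈ Finset.univ.filter (c1 s), w1 s μ)
            * (∑ ν ∈ Finset.univ.filter (c2 s), w2 s ν) := by
      intro a
      rw [Finset.sum_product]
      refine Finset.sum_congr rfl fun s hs => ?_
      rw [Finset.sum_product]
      rw [Finset.sum_filter, Finset.sum_filter, Finset.sum_mul_sum]
      refine Finset.sum_congr rfl fun μ _ => ?_
      refine Finset.sum_congr rfl fun ν _ => ?_
      show (if c1 s μ ∧ c2 s ν then W (a, s, μ, ν) else 0)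
        = (if c1 s μ then w1 s μ else 0) * (if c2 s ν then w2 s ν else 0)
      by_cases hμ : c1 s μ <;> by_cases hν : c2 s ν
      · rw [if_pos ⟨hμ, hν⟩, if_pos hμ, if_pos hν]
      · rw [if_neg (fun h => hν h.2), if_pos hμ, if_neg hν, mul_zero]
      · rw [if_neg (fun h => hμ h.1), if_neg hμ, if_pos hν, zero_mul]
      · rw [if_neg (fun h => hμ h.1), if_neg hμ, if_neg hν, mul_zero]
    simp only [hinner]
    rw [Finset.sum_const, nsmul_eq_mul]
    have hmm1 : ∀ s ∈ S, ∑ μ ∈ Finset.univ.filter (c1 s), w1 s μ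
        = mm A ({s} : Finset ι)ᶜ ({t0} : Finset ι)ᶜ := by
      intro s hs
      have hcs : (({s} : Finset ι)ᶜ).card = (({t0} : Finset ι)ᶜ).card := by
        rw [Finset.card_compl, Finset.card_compl, Finset.card_singleton,
          Finset.card_singleton]
      have henc := encode (({s} : Finset ι)ᶜ) (({t0} : Finset ι)ᶜ) hcs (fun i c => A i c)
      rw [compl_compl, Finset.card_singleton] at henc
      simp only [hc1, hw1]
      rw [henc, ← mm_eq_sum]
      norm_num [Nat.factorial]
    have hmm2 : ∀ s ∈ S, ∑ ν ∈ Finset.univ.filter (c2 s), w2 s ν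
        = ((S.card - 1).factorial : ℝ) * mm A ((S.erase s)ᶜ) ((T.erase t0)ᶜ) := by
      intro s hs
      have hce : ((S.erase s)ᶜ : Finset ι).card = ((T.erase t0)ᶜ : Finset ι).card := by
        rw [Finset.card_compl, Finset.card_compl, Finset.card_erase_of_mem hs,
          Finset.card_erase_of_mem ht0, hcard]
      have henc := encode ((S.erase s)ᶜ) ((T.erase t0)ᶜ) hce (fun i c => A i c)
      rw [compl_compl, Finset.card_erase_of_mem hs] at henc
      simp only [hc2, hw2]
      rw [henc, ← mm_eq_sum]
    calc (S.card : ℝ) * ∑ s ∈ S, (∑ μ ∈ Finset.univ.filter (c1 s), w1 s μ)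
          * (∑ ν ∈ Finset.univ.filter (c2 s), w2 s ν)
        = (S.card : ℝ) * ∑ s ∈ S, mm A ({s} : Finset ι)ᶜ ({t0} : Finset ι)ᶜ
            * (((S.card - 1).factorial : ℝ)
              * mm A ((S.erase s)ᶜ) ((T.erase t0)ᶜ)) := by
          congr 1
          refine Finset.sum_congr rfl fun s hs => ?_
          rw [hmm1 s hs, hmm2 s hs]
      _ = (∑ s ∈ S, mm A ({s} : Finset ι)ᶜ ({t0} : Finset ι)ᶜ
            * mm A ((S.erase s)ᶜ) ((T.erase t0)ᶜ)) * (Nat.factorial S.card : ℝ) := by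
          rw [Finset.mul_sum, Finset.sum_mul]
          refine Finset.sum_congr rfl fun s hs => ?_
          have : (S.card : ℝ) * ((S.card - 1).factorial : ℝ) = (S.card.factorial : ℝ) := by
            rw [← Nat.cast_mul]
            congr 1
            obtain ⟨k, hk⟩ : ∃ k, S.card = k + 1 := ⟨S.card - 1, by omega⟩
            rw [hk]
            simp [Nat.factorial]
          ring_nf
          rw [← this]
          ring
    -- done hC
  -- step B : the injection inequality
  have hB : ∑ p ∈ src, w p ≤ ∑ q ∈ tgt, W q := by
    have h1 : ∑ p ∈ src, w p = ∑ p ∈ src, W (Φ p) :=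
      Finset.sum_congr rfl fun p hp => (hwt p hp).symm
    have h2 : ∑ p ∈ src, W (Φ p) = ∑ q ∈ src.image Φ, W q :=
      (Finset.sum_image hinj).symm
    rw [h1, h2]
    refine Finset.sum_le_sum_of_subset_of_nonneg ?_ ?_
    · intro q hq
      obtain ⟨p, hp, rfl⟩ := Finset.mem_image.1 hq
      exact himg p hp
    · intro q _ _
      rw [hW, hw1, hw2]
      exact mul_nonneg (Finset.prod_nonneg fun i _ => hA _ _)
        (Finset.prod_nonneg fun i _ => hA _ _)
  -- conclude
  have hfac : (0 : ℝ) < (Nat.factorial S.card : ℝ) := by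
    exact_mod_cast Nat.factorial_pos _
  rw [← mul_le_mul_iff_left₀ hfac, ← hA1, ← hC]
  exact hB

end Claim

section MainInd
open Equiv
variable {ι : Type*} [Fintype ι] [DecidableEq ι]

noncomputable def toErase {S T : Finset ι} {t0 s : ι} (ht0 : t0 ∈ T) (hs : s ∈ S)
    (hcards : (T.erase t0).card = (S.erase s).card) (f : ↥T ≃ ↥S)
    (hf : (f ⟨t0, ht0⟩ : ι) = s) : ↥(T.erase t0) ≃ ↥(S.erase s) :=
  Equiv.ofBijective (fun t => ⟨(f ⟨(t : ι), Finset.mem_of_mem_erase t.2⟩ : ι), by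
    rw [Finset.mem_erase]
    refine ⟨?_, (f _).2⟩
    intro he
    have h2 : f ⟨(t : ι), Finset.mem_of_mem_erase t.2⟩ = f ⟨t0, ht0⟩ :=
      Subtype.ext (by rw [he, hf])
    have h3 := f.injective h2
    have h4 : (t : ι) = t0 := congrArg Subtype.val h3
    exact (Finset.mem_erase.1 t.2).1 h4⟩) (by
    rw [Fintype.bijective_iff_injective_and_card]
    constructor
    · intro a b hab
      dsimp only at hab
      have h1 := congrArg Subtype.val hab
      have h2 := f.injective (Subtype.ext h1)
      have h3 : (a : ι) = (b : ι) := Subtype.mk_eq_mk.1 h2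
      exact Subtype.ext h3
    · rw [Fintype.card_coe, Fintype.card_coe]; exact hcards)

theorem toErase_apply {S T : Finset ι} {t0 s : ι} (ht0 : t0 ∈ T) (hs : s ∈ S)
    (hcards : (T.erase t0).card = (S.erase s).card) (f : ↥T ≃ ↥S)
    (hf : (f ⟨t0, ht0⟩ : ι) = s) (t : ↥(T.erase t0)) :
    (toErase ht0 hs hcards f hf t : ι) = (f ⟨(t : ι), Finset.mem_of_mem_erase t.2⟩ : ι) := rfl

noncomputable def ofErase {S T : Finset ι} {t0 s : ι} (ht0 : t0 ∈ T) (hs : s ∈ S)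
    (hcard : S.card = T.card) (f' : ↥(T.erase t0) ≃ ↥(S.erase s)) : ↥T ≃ ↥S :=
  Equiv.ofBijective (fun t => if h : (t : ι) = t0 then ⟨s, hs⟩ else
      ⟨(f' ⟨(t : ι), Finset.mem_erase.2 ⟨h, t.2⟩⟩ : ι),
        Finset.mem_of_mem_erase (f' _).2⟩) (by
    rw [Fintype.bijective_iff_injective_and_card]
    constructor
    · intro a b hab
      dsimp only at hab
      by_cases ha : (a : ι) = t0 <;> by_cases hb : (b : ι) = t0
      · exact Subtype.ext (ha.trans hb.symm)
      · rw [dif_pos ha, dif_neg hb] at hab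
        have h9 := congrArg Subtype.val hab
        exact absurd h9.symm (Finset.mem_erase.1 (f' _).2).1
      · rw [dif_neg ha, dif_pos hb] at hab
        have h9 := congrArg Subtype.val hab
        exact absurd h9 (Finset.mem_erase.1 (f' _).2).1
      · rw [dif_neg ha, dif_neg hb] at hab
        have h1 := congrArg Subtype.val hab
        have h2 := f'.injective (Subtype.ext h1)
        have h3 : (a : ι) = (b : ι) := Subtype.mk_eq_mk.1 h2
        exact Subtype.ext h3
    · rw [Fintype.card_coe, Fintype.card_coe]; exact hcard.symm)

theorem ofErase_apply {S T : Finset ι} {t0 s : ι} (ht0 : t0 ∈ T) (hs : s ∈ S)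
    (hcard : S.card = T.card) (f' : ↥(T.erase t0) ≃ ↥(S.erase s)) (t : ↥T) :
    ofErase ht0 hs hcard f' t = if h : (t : ι) = t0 then ⟨s, hs⟩ else
      ⟨(f' ⟨(t : ι), Finset.mem_erase.2 ⟨h, t.2⟩⟩ : ι),
        Finset.mem_of_mem_erase (f' _).2⟩ := rfl

theorem regroup (G : ι → ι → ℝ) (S T : Finset ι) (hcard : S.card = T.card) {t0 : ι}
    (ht0 : t0 ∈ T) :
    ∑ f : ↥T ≃ ↥S, ∏ t : ↥T, G (f t : ι) (t : ι)
      = ∑ s ∈ S, G s t0 *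
          ∑ f' : ↥(T.erase t0) ≃ ↥(S.erase s), ∏ t : ↥(T.erase t0), G (f' t : ι) (t : ι) := by
  have hmaps : ∀ f : ↥T ≃ ↥S, f ∈ (Finset.univ : Finset (↥T ≃ ↥S)) →
      ((f ⟨t0, ht0⟩ : ι)) ∈ S := fun f _ => (f ⟨t0, ht0⟩).2
  rw [← Finset.sum_fiberwise_of_maps_to hmaps]
  refine Finset.sum_congr rfl fun s hs => ?_
  have hcards : (T.erase t0).card = (S.erase s).card := by
    rw [Finset.card_erase_of_mem ht0, Finset.card_erase_of_mem hs, hcard]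
  rw [Finset.mul_sum]
  refine Finset.sum_bij'
    (i := fun f hf => toErase ht0 hs hcards f (Finset.mem_filter.1 hf).2)
    (j := fun f' _ => ofErase ht0 hs hcard f') ?_ ?_ ?_ ?_ ?_
  · intro f hf; exact Finset.mem_univ _
  · intro f' _
    refine Finset.mem_filter.2 ⟨Finset.mem_univ _, ?_⟩
    rw [ofErase_apply, dif_pos rfl]
  · -- left inverse : ofErase (toErase f) = f
    intro f hf
    have hff := (Finset.mem_filter.1 hf).2
    ext t
    rw [ofErase_apply]
    by_cases h : (t : ι) = t0
    · rw [dif_pos h]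
      have h5 : (⟨t0, ht0⟩ : ↥T) = t := Subtype.ext h.symm
      rw [← h5]
      exact hff.symm
    · rw [dif_neg h]
      exact congrArg (fun x => (f x : ι)) (Subtype.ext rfl)
  · -- right inverse : toErase (ofErase f') = f'
    intro f' hf'
    ext t
    rw [toErase_apply]
    have hne : ((⟨(t : ι), Finset.mem_of_mem_erase t.2⟩ : ↥T) : ι) ≠ t0 :=
      (Finset.mem_erase.1 t.2).1
    rw [ofErase_apply, dif_neg hne]
  · -- weights
    intro f hf
    have hff := (Finset.mem_filter.1 hf).2
    have e1 : ∏ t : ↥T, G (f t : ι) (t : ι)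
        = ∏ x ∈ T, G (if h : x ∈ T then (f ⟨x, h⟩ : ι) else x) x := by
      rw [← Finset.prod_attach T (fun x => G (if h : x ∈ T then (f ⟨x, h⟩ : ι) else x) x),
        Finset.univ_eq_attach]
      refine Finset.prod_congr rfl fun t _ => ?_
      rw [dif_pos t.2]
    rw [e1, ← Finset.mul_prod_erase T _ ht0, dif_pos ht0]
    congr 1
    · exact congrArg (fun x => G x t0) hff
    · rw [← Finset.prod_attach (T.erase t0)
        (fun x => G (if h : x ∈ T then (f ⟨x, h⟩ : ι) else x) x), Finset.univ_eq_attach]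
      refine Finset.prod_congr rfl fun t _ => ?_
      rw [dif_pos (Finset.mem_of_mem_erase t.2)]
      rfl

theorem per_nonneg {A : Matrix ι ι ℝ} (hA : ∀ i j, 0 ≤ A i j) : 0 ≤ per A := by
  rw [per_eq_perR]; exact perR_nonneg hA

theorem main_ind (A : Matrix ι ι ℝ) (hA : ∀ i j, 0 ≤ A i j) :
    ∀ (k : ℕ) (S T : Finset ι), S.card = k → T.card = k →
    per A ^ k * mm A Sᶜ Tᶜ ≤
      per A * ∑ f : ↥T ≃ ↥S, ∏ t : ↥T,
        mm A ({(f t : ι)} : Finset ι)ᶜ ({(t : ι)} : Finset ι)ᶜ := by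
  intro k
  induction k with
  | zero =>
    intro S T hS hT
    rw [Finset.card_eq_zero] at hS hT
    subst hS; subst hT
    rw [pow_zero, one_mul]
    have h1 : ((∅ : Finset ι)ᶜ : Finset ι) = Finset.univ := by simp
    rw [h1, mm_univ]
    have h3 : ∑ f : (↥(∅ : Finset ι) ≃ ↥(∅ : Finset ι)), (∏ t : ↥(∅ : Finset ι),
        mm A ({(f t : ι)} : Finset ι)ᶜ ({(t : ι)} : Finset ι)ᶜ) = 1 := by
      have h2 : ∀ f : ↥(∅ : Finset ι) ≃ ↥(∅ : Finset ι), (∏ t : ↥(∅ : Finset ι),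
          mm A ({(f t : ι)} : Finset ι)ᶜ ({(t : ι)} : Finset ι)ᶜ) = 1 := by
        intro f
        apply Finset.prod_of_isEmpty
      rw [Finset.sum_congr rfl fun f _ => h2 f, Finset.sum_const, nsmul_eq_mul, mul_one,
        Finset.card_univ, Fintype.card_equiv (Equiv.refl _)]
      simp
    rw [h3, mul_one]
  | succ k ih =>
    intro S T hS hT
    obtain ⟨t0, ht0⟩ := Finset.card_pos.1 (show 0 < T.card by omega)
    have hcard : S.card = T.card := by rw [hS, hT]
    have hper0 : 0 ≤ per A := per_nonneg hA
    have step1 : per A ^ (k+1) * mm A Sᶜ Tᶜ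
        ≤ per A ^ k * ∑ s ∈ S, mm A ({s} : Finset ι)ᶜ ({t0} : Finset ι)ᶜ
            * mm A ((S.erase s)ᶜ) ((T.erase t0)ᶜ) := by
      have h0 : per A ^ (k+1) * mm A Sᶜ Tᶜ = per A ^ k * (per A * mm A Sᶜ Tᶜ) := by ring
      rw [h0]
      exact mul_le_mul_of_nonneg_left (claim_step A hA S T hcard ht0) (pow_nonneg hper0 k)
    have step2 : per A ^ k * ∑ s ∈ S, mm A ({s} : Finset ι)ᶜ ({t0} : Finset ι)ᶜ
            * mm A ((S.erase s)ᶜ) ((T.erase t0)ᶜ)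
        ≤ ∑ s ∈ S, mm A ({s} : Finset ι)ᶜ ({t0} : Finset ι)ᶜ
            * (per A * ∑ f' : ↥(T.erase t0) ≃ ↥(S.erase s), ∏ t : ↥(T.erase t0),
              mm A ({(f' t : ι)} : Finset ι)ᶜ ({(t : ι)} : Finset ι)ᶜ) := by
      rw [Finset.mul_sum]
      refine Finset.sum_le_sum fun s hs => ?_
      have h1 : per A ^ k * (mm A ({s} : Finset ι)ᶜ ({t0} : Finset ι)ᶜ
            * mm A ((S.erase s)ᶜ) ((T.erase t0)ᶜ))
          = mm A ({s} : Finset ι)ᶜ ({t0} : Finset ι)ᶜ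
            * (per A ^ k * mm A ((S.erase s)ᶜ) ((T.erase t0)ᶜ)) := by ring
      rw [h1]
      refine mul_le_mul_of_nonneg_left ?_ (mm_nonneg hA _ _)
      exact ih (S.erase s) (T.erase t0)
        (by rw [Finset.card_erase_of_mem hs, hS]; omega)
        (by rw [Finset.card_erase_of_mem ht0, hT]; omega)
    have step3 : ∑ s ∈ S, mm A ({s} : Finset ι)ᶜ ({t0} : Finset ι)ᶜ
            * (per A * ∑ f' : ↥(T.erase t0) ≃ ↥(S.erase s), ∏ t : ↥(T.erase t0),
              mm A ({(f' t : ι)} : Finset ι)ᶜ ({(t : ι)} : Finset ι)ᶜ)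
        = per A * ∑ f : ↥T ≃ ↥S, ∏ t : ↥T,
            mm A ({(f t : ι)} : Finset ι)ᶜ ({(t : ι)} : Finset ι)ᶜ := by
      rw [regroup (fun a b => mm A ({a} : Finset ι)ᶜ ({b} : Finset ι)ᶜ) S T hcard ht0,
        Finset.mul_sum]
      refine Finset.sum_congr rfl fun s hs => ?_
      ring
    calc per A ^ (k+1) * mm A Sᶜ Tᶜ
        ≤ per A ^ k * ∑ s ∈ S, mm A ({s} : Finset ι)ᶜ ({t0} : Finset ι)ᶜ
            * mm A ((S.erase s)ᶜ) ((T.erase t0)ᶜ) := step1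
      _ ≤ ∑ s ∈ S, mm A ({s} : Finset ι)ᶜ ({t0} : Finset ι)ᶜ
            * (per A * ∑ f' : ↥(T.erase t0) ≃ ↥(S.erase s), ∏ t : ↥(T.erase t0),
              mm A ({(f' t : ι)} : Finset ι)ᶜ ({(t : ι)} : Finset ι)ᶜ) := step2
      _ = _ := step3

end MainInd

theorem stmt4 {n : ℕ} (B : Matrix (Fin (n + 1)) (Fin (n + 1)) ℝ)
    (hB : ∀ i j, 0 ≤ B i j) (hper : 0 < per B)
    (S T : Finset (Fin (n + 1))) (hST : S.card = T.card) :
    perR (B.submatrix (fun a : ↥(Sᶜ : Finset (Fin (n + 1))) => (a : Fin (n + 1)))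
        (fun b : ↥(Tᶜ : Finset (Fin (n + 1))) => (b : Fin (n + 1)))) / per B ≤
      perR ((pinv B).submatrix (fun a : ↥T => (a : Fin (n + 1)))
        (fun b : ↥S => (b : Fin (n + 1)))) := by
  have hRHS : perR ((pinv B).submatrix (fun a : ↥T => (a : Fin (n + 1)))
      (fun b : ↥S => (b : Fin (n + 1))))
      = (∑ f : ↥T ≃ ↥S, ∏ t : ↥T, mm B ({(f t : Fin (n+1))} : Finset (Fin (n+1)))ᶜ
          ({(t : Fin (n+1))} : Finset (Fin (n+1)))ᶜ) / per B ^ T.card := by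
    rw [perR, Finset.sum_div]
    refine Finset.sum_congr rfl fun f _ => ?_
    have hentry : ∀ t : ↥T, ((pinv B).submatrix (fun a : ↥T => (a : Fin (n + 1)))
        (fun b : ↥S => (b : Fin (n + 1)))) t (f t)
        = mm B ({(f t : Fin (n+1))} : Finset (Fin (n+1)))ᶜ
            ({(t : Fin (n+1))} : Finset (Fin (n+1)))ᶜ / per B := by
      intro t
      show pinv B (t : Fin (n+1)) (f t : Fin (n+1)) = _
      rw [pinv, Matrix.of_apply, per_submatrix_succAbove]
    rw [Finset.prod_congr rfl fun t _ => hentry t, Finset.prod_div_distrib,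
      Finset.prod_const, Finset.card_univ, Fintype.card_coe]
  show mm B Sᶜ Tᶜ / per B ≤ _
  rw [hRHS, div_le_div_iff₀ hper (pow_pos hper _)]
  calc mm B Sᶜ Tᶜ * per B ^ T.card = per B ^ T.card * mm B Sᶜ Tᶜ := by ring
    _ ≤ per B * ∑ f : ↥T ≃ ↥S, ∏ t : ↥T, mm B ({(f t : Fin (n+1))} : Finset (Fin (n+1)))ᶜ
          ({(t : Fin (n+1))} : Finset (Fin (n+1)))ᶜ :=
        main_ind B hB T.card S T hST rfl
    _ = _ := by ring
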